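/- In the Braess network with quartic cost c(x) = 0.5x − 0.5x² − x³ + 2x⁴ and no incentives, there exists a ∈ (0, 1/2) such that the symmetric flow (f_{p1}, f_{p2}, f_{p3}) = (a, 1 − 2a, a) is a Wardrop equilibrium in which every path has cost exactly 2, so the equilibrium social cost equals 2. -/
import Mathlib


/-- Quartic latency `c(x) = 0.5x - 0.5x² - x³ + 2x⁴` on edges `e1`, `e4` of the Braess network. -/
noncomputable def c (x : ℝ) : ℝ := 0.5*x - 0.5*x^2 - x^3 + 2*x^4

/-- Path costs in the Braess network (paths `p1, p2, p3` indexed by `Fin 3`), with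
incentives `uv2` at node `v` and `uw2` at node `w` applied to path `p2` (all other
incentives zero).  Edge flows: `f_{e1} = f_v = f 0 + f 1`, `f_{e4} = f_w = f 1 + f 2`;
edges `e2`, `e3` have constant cost `1`, edge `e5` has cost `0`; base node costs
`c_v(x) = c_w(x) = x`. -/
noncomputable def cost (uv2 uw2 : ℝ) (f : Fin 3 → ℝ) : Fin 3 → ℝ :=
  ![ c (f 0 + f 1) + 1 + (f 0 + f 1),
     c (f 0 + f 1) + 0 + c (f 1 + f 2) + ((f 0 + f 1) + uv2) + ((f 1 + f 2) + uw2),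
     1 + c (f 1 + f 2) + (f 1 + f 2) ]

/-- In the quartic Braess network with no incentives, there exists
`a ∈ (0, 1/2)` such that the symmetric flow `(a, 1−2a, a)` is a Wardrop equilibrium in
which every path has cost exactly `2`, so the equilibrium social cost equals `2`. -/
theorem braess_quartic_no_incentive_equilibrium :
    ∃ a : ℝ, 0 < a ∧ a < 1/2 ∧
      (∀ i j : Fin 3, 0 < (![a, 1 - 2*a, a] : Fin 3 → ℝ) i →
        cost 0 0 ![a, 1 - 2*a, a] i ≤ cost 0 0 ![a, 1 - 2*a, a] j) ∧
      (∀ i : Fin 3, cost 0 0 ![a, 1 - 2*a, a] i = 2) ∧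
      (∑ i, (![a, 1 - 2*a, a] : Fin 3 → ℝ) i * cost 0 0 ![a, 1 - 2*a, a] i) = 2 := by
  have hcont : Continuous fun x : ℝ => c x + x := by
    unfold c; continuity
  have hIVT := intermediate_value_Ioo (by norm_num : (1/2:ℝ) ≤ 1) hcont.continuousOn
  have hmem : (1:ℝ) ∈ Set.Ioo ((fun x : ℝ => c x + x) (1/2)) ((fun x : ℝ => c x + x) 1) := by
    simp only [c]; norm_num
  obtain ⟨x, hx, hgx⟩ := hIVT hmem
  simp only at hgx
  obtain ⟨hx1, hx2⟩ := hx
  have hcx : c x = 1 - x := by linarith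
  have h1 : (1:ℝ) - x + (1 - 2*(1-x)) = x := by ring
  have h2 : (1:ℝ) - 2*(1-x) + (1 - x) = x := by ring
  have e0 : cost 0 0 ![1-x, 1-2*(1-x), 1-x] 0 = 2 := by
    simp only [cost, Matrix.cons_val_zero, Matrix.cons_val_one, Matrix.head_cons,
      Matrix.cons_val_two, Matrix.tail_cons, h1, h2, hcx]; ring
  have e1 : cost 0 0 ![1-x, 1-2*(1-x), 1-x] 1 = 2 := by
    simp only [cost, Matrix.cons_val_zero, Matrix.cons_val_one, Matrix.head_cons,
      Matrix.cons_val_two, Matrix.tail_cons, h1, h2, hcx]; ring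
  have e2 : cost 0 0 ![1-x, 1-2*(1-x), 1-x] 2 = 2 := by
    simp only [cost, Matrix.cons_val_zero, Matrix.cons_val_one, Matrix.head_cons,
      Matrix.cons_val_two, Matrix.tail_cons, h1, h2, hcx]; ring
  have hall : ∀ i : Fin 3, cost 0 0 ![1-x, 1-2*(1-x), 1-x] i = 2 := by
    intro i
    fin_cases i
    · exact e0
    · exact e1
    · exact e2
  refine ⟨1 - x, by linarith, by linarith, ?_, hall, ?_⟩
  · intro i j _
    rw [hall i, hall j]
  · rw [Fin.sum_univ_three, hall 0, hall 1, hall 2]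
    simp only [Matrix.cons_val_zero, Matrix.cons_val_one, Matrix.head_cons,
      Matrix.cons_val_two, Matrix.tail_cons]
    ring
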